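/- If A, B ∈ ℝ^{p×q} satisfy A B⊤ = 0 and A⊤ B = 0 (equivalently, the column space of A is orthogonal to the column space of B and the row space of A is orthogonal to the row space of B), then ‖A + B‖_* = ‖A‖_* + ‖B‖_*. -/

import Mathlib

open Matrix

/-- The nuclear norm of a real matrix: the sum of its singular values
(square roots of the eigenvalues of `Aᵀ * A`). -/
noncomputable def nuclearNorm {p m : Type*} [Fintype p] [Fintype m] [DecidableEq m]
    (A : Matrix p m ℝ) : ℝ :=
  ∑ i, Real.sqrt ((show (Aᵀ * A).IsHermitian by
    simpa [Matrix.conjTranspose_eq_transpose_of_trivial] using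
      Matrix.isHermitian_conjTranspose_mul_self A).eigenvalues i)

section PosSemidefSqrt
open scoped MatrixOrder

noncomputable def Matrix.PosSemidef.sqrt {n : Type*} [Fintype n] [DecidableEq n]
    {A : Matrix n n ℝ} (_hA : A.PosSemidef) : Matrix n n ℝ := CFC.sqrt A

lemma Matrix.PosSemidef.posSemidef_sqrt {n : Type*} [Fintype n] [DecidableEq n]
    {A : Matrix n n ℝ} (hA : A.PosSemidef) : hA.sqrt.PosSemidef :=
  Matrix.nonneg_iff_posSemidef.mp (CFC.sqrt_nonneg A)

lemma Matrix.PosSemidef.sqrt_mul_self {n : Type*} [Fintype n] [DecidableEq n]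
    {A : Matrix n n ℝ} (hA : A.PosSemidef) : hA.sqrt * hA.sqrt = A :=
  CFC.sqrt_mul_sqrt_self A (Matrix.nonneg_iff_posSemidef.mpr hA)

lemma Matrix.PosSemidef.eq_sqrt_of_sq_eq {n : Type*} [Fintype n] [DecidableEq n]
    {B : Matrix n n ℝ} (hB : B.PosSemidef) {A : Matrix n n ℝ} {hA : A.PosSemidef}
    (h : B ^ 2 = A) : B = hA.sqrt :=
  (CFC.sqrt_unique (by rw [← sq]; exact h) (Matrix.nonneg_iff_posSemidef.mpr hB)).symm

lemma Matrix.PosSemidef.sqrt_def' {n : Type*} [Fintype n] [DecidableEq n]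
    {A : Matrix n n ℝ} (hA : A.PosSemidef) : hA.sqrt =
      (hA.1.eigenvectorUnitary : Matrix n n ℝ) *
        diagonal (Real.sqrt ∘ hA.1.eigenvalues) * (star hA.1.eigenvectorUnitary : Matrix n n ℝ) := by
  unfold Matrix.PosSemidef.sqrt
  rw [CFC.sqrt_eq_cfc, cfc_nnreal_eq_real _ A, hA.1.cfc_eq, Matrix.IsHermitian.cfc,
    Unitary.conjStarAlgAut_apply]
  congr 2
  congr 1
  funext i
  simp [hA.eigenvalues_nonneg i]

end PosSemidefSqrt

lemma trace_sqrt_aux {n : Type*} [Fintype n] [DecidableEq n] {H : Matrix n n ℝ}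
    (hH : Matrix.PosSemidef H) :
    hH.sqrt.trace = ∑ i, Real.sqrt (hH.1.eigenvalues i) := by
  rw [Matrix.PosSemidef.sqrt_def', Matrix.trace_mul_cycle]
  have h1 : (star hH.1.eigenvectorUnitary : Matrix n n ℝ) * hH.1.eigenvectorUnitary.1 = 1 :=
    hH.1.eigenvectorUnitary.2.1
  rw [h1, Matrix.one_mul, Matrix.trace_diagonal]
  rfl

lemma sqrt_mul_sqrt_zero {n : Type*} [Fintype n] [DecidableEq n] {M N : Matrix n n ℝ}
    (hM : Matrix.PosSemidef M) (hN : Matrix.PosSemidef N) (h : M * N = 0) :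
    hM.sqrt * hN.sqrt = 0 := by
  have hMs : M * hN.sqrt = 0 := by
    rw [← Matrix.self_mul_conjTranspose_eq_zero]
    have : hN.sqrtᴴ = hN.sqrt := hN.posSemidef_sqrt.1
    calc M * hN.sqrt * (M * hN.sqrt)ᴴ
        = M * (hN.sqrt * hN.sqrt) * Mᴴ := by
          rw [Matrix.conjTranspose_mul, this]; noncomm_ring
      _ = M * N * Mᴴ := by rw [hN.sqrt_mul_self]
      _ = 0 := by rw [h, Matrix.zero_mul]
  rw [← Matrix.conjTranspose_mul_self_eq_zero]
  have hs : hM.sqrtᴴ = hM.sqrt := hM.posSemidef_sqrt.1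
  calc (hM.sqrt * hN.sqrt)ᴴ * (hM.sqrt * hN.sqrt)
      = hN.sqrtᴴ * (hM.sqrt * hM.sqrt * hN.sqrt) := by
        rw [Matrix.conjTranspose_mul, hs]; noncomm_ring
    _ = hN.sqrtᴴ * (M * hN.sqrt) := by rw [hM.sqrt_mul_self]
    _ = 0 := by rw [hMs, Matrix.mul_zero]

/-- **Additivity of the nuclear norm for doubly orthogonal matrices.**
If `A, B ∈ ℝ^{p×q}` satisfy `A Bᵀ = 0` and `Aᵀ B = 0` (the column space of `A` is
orthogonal to the column space of `B` and the row space of `A` is orthogonal to the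
row space of `B`), then `‖A + B‖_* = ‖A‖_* + ‖B‖_*`. -/
theorem nuclearNorm_add_of_orthogonal
    {p q : ℕ} (A B : Matrix (Fin p) (Fin q) ℝ)
    (h₁ : A * Bᵀ = 0) (h₂ : Aᵀ * B = 0) :
    nuclearNorm (A + B) = nuclearNorm A + nuclearNorm B := by
  have hconj : ∀ C : Matrix (Fin p) (Fin q) ℝ, Cᴴ = Cᵀ := fun C => rfl
  have hA : Matrix.PosSemidef (Aᵀ * A) := by
    rw [← hconj]; exact Matrix.posSemidef_conjTranspose_mul_self A
  have hB : Matrix.PosSemidef (Bᵀ * B) := by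
    rw [← hconj]; exact Matrix.posSemidef_conjTranspose_mul_self B
  have hAB : Matrix.PosSemidef ((A + B)ᵀ * (A + B)) := by
    rw [← hconj]; exact Matrix.posSemidef_conjTranspose_mul_self (A + B)
  have h₂' : Bᵀ * A = 0 := by
    have := congrArg Matrix.transpose h₂
    simpa [Matrix.transpose_mul] using this
  have hGram : (A + B)ᵀ * (A + B) = Aᵀ * A + Bᵀ * B := by
    rw [Matrix.transpose_add, Matrix.add_mul, Matrix.mul_add, Matrix.mul_add, h₂, h₂']
    abel
  -- cross products of Gram matrices vanish
  have hMN : (Aᵀ * A) * (Bᵀ * B) = 0 := by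
    calc (Aᵀ * A) * (Bᵀ * B) = Aᵀ * (A * Bᵀ) * B := by simp only [Matrix.mul_assoc]
      _ = 0 := by rw [h₁, Matrix.mul_zero, Matrix.zero_mul]
  have hNM : (Bᵀ * B) * (Aᵀ * A) = 0 := by
    have h₁' : B * Aᵀ = 0 := by
      have := congrArg Matrix.transpose h₁
      simpa [Matrix.transpose_mul] using this
    calc (Bᵀ * B) * (Aᵀ * A) = Bᵀ * (B * Aᵀ) * A := by simp only [Matrix.mul_assoc]
      _ = 0 := by rw [h₁', Matrix.mul_zero, Matrix.zero_mul]
  have hs1 : hA.sqrt * hB.sqrt = 0 := sqrt_mul_sqrt_zero hA hB hMN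
  have hs2 : hB.sqrt * hA.sqrt = 0 := sqrt_mul_sqrt_zero hB hA hNM
  -- sqrt of the sum is the sum of sqrts
  have hsum : hAB.sqrt = hA.sqrt + hB.sqrt := by
    symm
    apply Matrix.PosSemidef.eq_sqrt_of_sq_eq (hA.posSemidef_sqrt.add hB.posSemidef_sqrt)
    rw [hGram]
    have : (hA.sqrt + hB.sqrt) ^ 2
        = hA.sqrt * hA.sqrt + (hA.sqrt * hB.sqrt + hB.sqrt * hA.sqrt) + hB.sqrt * hB.sqrt := by
      noncomm_ring
    rw [this, hs1, hs2, hA.sqrt_mul_self, hB.sqrt_mul_self]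
    simp
  have key : ∀ (C : Matrix (Fin p) (Fin q) ℝ) (hC : Matrix.PosSemidef (Cᵀ * C)),
      nuclearNorm C = hC.sqrt.trace := by
    intro C hC
    rw [trace_sqrt_aux]
    rfl
  rw [key (A + B) hAB, key A hA, key B hB, hsum, Matrix.trace_add]
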